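/- In the infinite-dataset limit, the PP-AVI objective satisfies: E_{p(D)}[ log q(Y_t|D_c, X_t) + ELBO(D_c) ] = H(Y_t|D_c, X_t) + H(Y_c|X_c) − E_{p(D_c,X_t)}[KL[p(Y_t|D_c,X_t) ‖ q(Y_t|D_c,X_t)]] − E_{p(X_c)}[KL[p(Y_c|X_c) ‖ p_Ψ(Y_c|X_c)]] − E_{p(D_c)}[KL[q(W|D_c) ‖ p_Ψ(W|D_c)]], where the entropies are constants independent of the model. Hence maximising the PP-AVI objective is equivalent to minimising the sum of the three expected KL divergences. -/
import Mathlib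


open MeasureTheory

variable {Xc Yc Xt Yt : Type*} [MeasurableSpace Xc] [MeasurableSpace Yc]
  [MeasurableSpace Xt] [MeasurableSpace Yt]

/-- Expectation of `f(xc, yc, xt, yt)` under the joint data-generating density
`J(xc, yc, xt, yt) = p(xc) p(yc|xc) p(xt|Dc) p(yt|Dc, xt)` (w.r.t. the product of the
base measures), where a dataset is `D = (D_c, X_t, Y_t)` with context `D_c = (xc, yc)`. -/
noncomputable def Ejoint (μXc : Measure Xc) (μYc : Measure Yc) (μXt : Measure Xt)
    (μYt : Measure Yt)
    (pXc : Xc → ℝ) (pYc : Xc → Yc → ℝ) (pXt : Xc → Yc → Xt → ℝ)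
    (pYt : Xc → Yc → Xt → Yt → ℝ) (f : Xc → Yc → Xt → Yt → ℝ) : ℝ :=
  ∫ z : Xc × Yc × Xt × Yt,
      (pXc z.1 * pYc z.1 z.2.1 * pXt z.1 z.2.1 z.2.2.1
        * pYt z.1 z.2.1 z.2.2.1 z.2.2.2) * f z.1 z.2.1 z.2.2.1 z.2.2.2
    ∂(μXc.prod (μYc.prod (μXt.prod μYt)))

/-- In the infinite-dataset limit the PP-AVI objective satisfies
`E_{p(D)}[log q(Y_t|D_c, X_t) + ELBO(D_c)]
  = H(Y_t|D_c, X_t) + H(Y_c|X_c)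
    − E[KL[p(Y_t|D_c,X_t) ‖ q(Y_t|D_c,X_t)]]
    − E[KL[p(Y_c|X_c) ‖ p_Ψ(Y_c|X_c)]]
    − E[KL[q(W|D_c) ‖ p_Ψ(W|D_c)]]`,
with `ELBO(D_c) = log p_Ψ(Y_c|X_c) − KL[q(W|D_c) ‖ p_Ψ(W|D_c)]` and where, following
the paper's convention, the model-independent entropy constants are
`H(Y_t|D_c,X_t) = E[log p(Y_t|D_c,X_t)]` and `H(Y_c|X_c) = E[log p(Y_c|X_c)]`.
Hence (second conjunct) maximising the PP-AVI objective is equivalent to minimising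
the sum of the three expected KL divergences: for two models the objectives and the
KL sums compare in opposite directions. -/
theorem ppavi_decomposition
    (μXc : Measure Xc) (μYc : Measure Yc) (μXt : Measure Xt) (μYt : Measure Yt)
    [SigmaFinite μXc] [SigmaFinite μYc] [SigmaFinite μXt] [SigmaFinite μYt]
    -- true data-generating process densities:
    (pXc : Xc → ℝ) (pYc : Xc → Yc → ℝ) (pXt : Xc → Yc → Xt → ℝ)
    (pYt : Xc → Yc → Xt → Yt → ℝ)
    (hpXc : ∀ a, 0 ≤ pXc a) (hpYc : ∀ a b, 0 < pYc a b)
    (hpXt : ∀ a b c, 0 ≤ pXt a b c) (hpYt : ∀ a b c d, 0 < pYt a b c d)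
    (hnXc : ∫ a, pXc a ∂μXc = 1) (hnYc : ∀ a, ∫ b, pYc a b ∂μYc = 1)
    (hnXt : ∀ a b, ∫ c, pXt a b c ∂μXt = 1)
    (hnYt : ∀ a b c, ∫ d, pYt a b c d ∂μYt = 1)
    -- two models: posterior predictive `qpred`, marginal likelihood `pΨ`, and the
    -- weight-space divergence `KLW (D_c) = KL[q(W|D_c) ‖ p_Ψ(W|D_c)] ≥ 0`:
    (qpred qpred' : Xc → Yc → Xt → Yt → ℝ) (pΨ pΨ' : Xc → Yc → ℝ)
    (KLW KLW' : Xc → Yc → ℝ)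
    (hqpred : ∀ a b c d, 0 < qpred a b c d) (hqpred' : ∀ a b c d, 0 < qpred' a b c d)
    (hpΨ : ∀ a b, 0 < pΨ a b) (hpΨ' : ∀ a b, 0 < pΨ' a b)
    (hKLW : ∀ a b, 0 ≤ KLW a b) (hKLW' : ∀ a b, 0 ≤ KLW' a b)
    -- all expectations below are finite:
    (hfin : ∀ f ∈ ({fun a b c d => Real.log (pYt a b c d),
        fun a b c d => Real.log (pYc a b),
        fun a b c d => Real.log (qpred a b c d),
        fun a b c d => Real.log (qpred' a b c d),
        fun a b c d => Real.log (pΨ a b), fun a b c d => Real.log (pΨ' a b),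
        fun a b c d => KLW a b, fun a b c d => KLW' a b} :
          Set (Xc → Yc → Xt → Yt → ℝ)),
      Integrable
        (fun z : Xc × Yc × Xt × Yt =>
          (pXc z.1 * pYc z.1 z.2.1 * pXt z.1 z.2.1 z.2.2.1
            * pYt z.1 z.2.1 z.2.2.1 z.2.2.2) * f z.1 z.2.1 z.2.2.1 z.2.2.2)
        (μXc.prod (μYc.prod (μXt.prod μYt)))) :
    (Ejoint μXc μYc μXt μYt pXc pYc pXt pYt
        (fun a b c d => Real.log (qpred a b c d) + (Real.log (pΨ a b) - KLW a b))
      = Ejoint μXc μYc μXt μYt pXc pYc pXt pYt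
          (fun a b c d => Real.log (pYt a b c d))
        + Ejoint μXc μYc μXt μYt pXc pYc pXt pYt
            (fun a b c d => Real.log (pYc a b))
        - Ejoint μXc μYc μXt μYt pXc pYc pXt pYt
            (fun a b c d => Real.log (pYt a b c d / qpred a b c d))
        - Ejoint μXc μYc μXt μYt pXc pYc pXt pYt
            (fun a b c d => Real.log (pYc a b / pΨ a b))
        - Ejoint μXc μYc μXt μYt pXc pYc pXt pYt (fun a b c d => KLW a b))
    ∧ ((Ejoint μXc μYc μXt μYt pXc pYc pXt pYt
          (fun a b c d => Real.log (qpred a b c d) + (Real.log (pΨ a b) - KLW a b))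
        ≥ Ejoint μXc μYc μXt μYt pXc pYc pXt pYt
            (fun a b c d => Real.log (qpred' a b c d) + (Real.log (pΨ' a b) - KLW' a b)))
      ↔ (Ejoint μXc μYc μXt μYt pXc pYc pXt pYt
            (fun a b c d => Real.log (pYt a b c d / qpred a b c d))
          + Ejoint μXc μYc μXt μYt pXc pYc pXt pYt
              (fun a b c d => Real.log (pYc a b / pΨ a b))
          + Ejoint μXc μYc μXt μYt pXc pYc pXt pYt (fun a b c d => KLW a b)
        ≤ Ejoint μXc μYc μXt μYt pXc pYc pXt pYt
              (fun a b c d => Real.log (pYt a b c d / qpred' a b c d))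
          + Ejoint μXc μYc μXt μYt pXc pYc pXt pYt
              (fun a b c d => Real.log (pYc a b / pΨ' a b))
          + Ejoint μXc μYc μXt μYt pXc pYc pXt pYt (fun a b c d => KLW' a b))) := by
  have hYt := hfin (fun a b c d => Real.log (pYt a b c d)) (by simp)
  have hYc := hfin (fun a b c d => Real.log (pYc a b)) (by simp)
  have hq := hfin (fun a b c d => Real.log (qpred a b c d)) (by simp)
  have hq' := hfin (fun a b c d => Real.log (qpred' a b c d)) (by simp)
  have hΨ := hfin (fun a b c d => Real.log (pΨ a b)) (by simp)
  have hΨ' := hfin (fun a b c d => Real.log (pΨ' a b)) (by simp)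
  have hK := hfin (fun a b c d => KLW a b) (by simp)
  have hK' := hfin (fun a b c d => KLW' a b) (by simp)
  -- abbreviate
  have Eadd : ∀ (f g h : Xc → Yc → Xt → Yt → ℝ),
      Integrable (fun z : Xc × Yc × Xt × Yt =>
        (pXc z.1 * pYc z.1 z.2.1 * pXt z.1 z.2.1 z.2.2.1
          * pYt z.1 z.2.1 z.2.2.1 z.2.2.2) * f z.1 z.2.1 z.2.2.1 z.2.2.2)
        (μXc.prod (μYc.prod (μXt.prod μYt))) →
      Integrable (fun z : Xc × Yc × Xt × Yt =>
        (pXc z.1 * pYc z.1 z.2.1 * pXt z.1 z.2.1 z.2.2.1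
          * pYt z.1 z.2.1 z.2.2.1 z.2.2.2) * g z.1 z.2.1 z.2.2.1 z.2.2.2)
        (μXc.prod (μYc.prod (μXt.prod μYt))) →
      Integrable (fun z : Xc × Yc × Xt × Yt =>
        (pXc z.1 * pYc z.1 z.2.1 * pXt z.1 z.2.1 z.2.2.1
          * pYt z.1 z.2.1 z.2.2.1 z.2.2.2) * h z.1 z.2.1 z.2.2.1 z.2.2.2)
        (μXc.prod (μYc.prod (μXt.prod μYt))) →
      Ejoint μXc μYc μXt μYt pXc pYc pXt pYt
          (fun a b c d => f a b c d + (g a b c d - h a b c d))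
        = Ejoint μXc μYc μXt μYt pXc pYc pXt pYt f
          + (Ejoint μXc μYc μXt μYt pXc pYc pXt pYt g
            - Ejoint μXc μYc μXt μYt pXc pYc pXt pYt h) := by
    intro f g h hf hg hh
    unfold Ejoint
    simp only [mul_add, mul_sub]
    have hgh : Integrable (fun z : Xc × Yc × Xt × Yt =>
        (pXc z.1 * pYc z.1 z.2.1 * pXt z.1 z.2.1 z.2.2.1
          * pYt z.1 z.2.1 z.2.2.1 z.2.2.2) * g z.1 z.2.1 z.2.2.1 z.2.2.2
        - (pXc z.1 * pYc z.1 z.2.1 * pXt z.1 z.2.1 z.2.2.1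
          * pYt z.1 z.2.1 z.2.2.1 z.2.2.2) * h z.1 z.2.1 z.2.2.1 z.2.2.2)
        (μXc.prod (μYc.prod (μXt.prod μYt))) := hg.sub hh
    rw [integral_add hf hgh, integral_sub hg hh]
  have Esub : ∀ (f g : Xc → Yc → Xt → Yt → ℝ),
      Integrable (fun z : Xc × Yc × Xt × Yt =>
        (pXc z.1 * pYc z.1 z.2.1 * pXt z.1 z.2.1 z.2.2.1
          * pYt z.1 z.2.1 z.2.2.1 z.2.2.2) * f z.1 z.2.1 z.2.2.1 z.2.2.2)
        (μXc.prod (μYc.prod (μXt.prod μYt))) →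
      Integrable (fun z : Xc × Yc × Xt × Yt =>
        (pXc z.1 * pYc z.1 z.2.1 * pXt z.1 z.2.1 z.2.2.1
          * pYt z.1 z.2.1 z.2.2.1 z.2.2.2) * g z.1 z.2.1 z.2.2.1 z.2.2.2)
        (μXc.prod (μYc.prod (μXt.prod μYt))) →
      Ejoint μXc μYc μXt μYt pXc pYc pXt pYt
          (fun a b c d => f a b c d - g a b c d)
        = Ejoint μXc μYc μXt μYt pXc pYc pXt pYt f
          - Ejoint μXc μYc μXt μYt pXc pYc pXt pYt g := by
    intro f g hf hg
    unfold Ejoint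
    simp only [mul_sub]
    rw [integral_sub hf hg]
  have hobj := Eadd (fun a b c d => Real.log (qpred a b c d)) (fun a b c d => Real.log (pΨ a b)) (fun a b c d => KLW a b) hq hΨ hK
  have hobj' := Eadd (fun a b c d => Real.log (qpred' a b c d)) (fun a b c d => Real.log (pΨ' a b)) (fun a b c d => KLW' a b) hq' hΨ' hK'
  have hdiv1 : (fun a b c d => Real.log (pYt a b c d / qpred a b c d))
      = fun a b c d => Real.log (pYt a b c d) - Real.log (qpred a b c d) := by
    funext a b c d; exact Real.log_div (hpYt a b c d).ne' (hqpred a b c d).ne'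
  have hdiv1' : (fun a b c d => Real.log (pYt a b c d / qpred' a b c d))
      = fun a b c d => Real.log (pYt a b c d) - Real.log (qpred' a b c d) := by
    funext a b c d; exact Real.log_div (hpYt a b c d).ne' (hqpred' a b c d).ne'
  have hdiv2 : (fun a b c d => Real.log (pYc a b / pΨ a b))
      = fun (a : Xc) (b : Yc) (_ : Xt) (_ : Yt) =>
          Real.log (pYc a b) - Real.log (pΨ a b) := by
    funext a b c d; exact Real.log_div (hpYc a b).ne' (hpΨ a b).ne'
  have hdiv2' : (fun a b c d => Real.log (pYc a b / pΨ' a b))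
      = fun (a : Xc) (b : Yc) (_ : Xt) (_ : Yt) =>
          Real.log (pYc a b) - Real.log (pΨ' a b) := by
    funext a b c d; exact Real.log_div (hpYc a b).ne' (hpΨ' a b).ne'
  have e1 := Esub (fun a b c d => Real.log (pYt a b c d)) (fun a b c d => Real.log (qpred a b c d)) hYt hq
  have e1' := Esub (fun a b c d => Real.log (pYt a b c d)) (fun a b c d => Real.log (qpred' a b c d)) hYt hq'
  have e2 := Esub (fun a b c d => Real.log (pYc a b)) (fun a b c d => Real.log (pΨ a b)) hYc hΨ
  have e2' := Esub (fun a b c d => Real.log (pYc a b)) (fun a b c d => Real.log (pΨ' a b)) hYc hΨ'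
  rw [hdiv1, hdiv1', hdiv2, hdiv2']
  constructor
  · linarith
  · constructor <;> intro hle <;> linarith
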